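/- Let L ∈ ℝ satisfy L ≤ g(r) for all r ∈ V, let x̂ ∈ V, and set π := (g(x̂) − L)·(2x̂ − 𝟙) ∈ ℝ^n. Then ⟨π, x̂⟩ + 𝓛(π) = g(x̂); in particular π attains the supremum over π' ∈ ℝ^n of ⟨π', x̂⟩ + 𝓛(π'), and 𝓛(π) = g(x̂) − ⟨π, x̂⟩. -/

import Mathlib

/-- The `0/1`-valued real vector associated with a binary vector `r ∈ {0,1}^n`. -/
def binVec {n : ℕ} (r : Fin n → Bool) : Fin n → ℝ := fun j => if r j then 1 else 0

/-- The Lagrangian dual function `𝓛(π) = min_{r ∈ {0,1}^n} (g(r) − ⟨π, r⟩)`. -/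
noncomputable def lagDual (n : ℕ) (g : (Fin n → Bool) → ℝ) (π : Fin n → ℝ) : ℝ :=
  ⨅ r : Fin n → Bool, (g r - ∑ j, π j * binVec r j)

/-- Proposition 7 of the paper: the integer optimality cut coefficient vector
`π = (g(x̂) − L)·(2x̂ − 𝟙)` is an optimal Lagrangian multiplier at the binary point `x̂`:
`⟨π, x̂⟩ + 𝓛(π) = g(x̂)`, `π` attains `sup_{π'} (⟨π', x̂⟩ + 𝓛(π'))`, and
`𝓛(π) = g(x̂) − ⟨π, x̂⟩`. -/
theorem stmt_11 (n : ℕ) (hn : 0 < n) (g : (Fin n → Bool) → ℝ) (L : ℝ)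
    (hL : ∀ r : Fin n → Bool, L ≤ g r) (xhat : Fin n → Bool)
    (π : Fin n → ℝ) (hπ : π = fun j => (g xhat - L) * (2 * binVec xhat j - 1)) :
    (∑ j, π j * binVec xhat j) + lagDual n g π = g xhat ∧
    (∀ π' : Fin n → ℝ,
      (∑ j, π' j * binVec xhat j) + lagDual n g π' ≤
        (∑ j, π j * binVec xhat j) + lagDual n g π) ∧
    lagDual n g π = g xhat - ∑ j, π j * binVec xhat j := by

  have hc : 0 ≤ g xhat - L := by linarith [hL xhat]
  have hbdd : ∀ π' : Fin n → ℝ,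
      BddBelow (Set.range fun r : Fin n → Bool => g r - ∑ j, π' j * binVec r j) :=
    fun π' => (Set.finite_range _).bddBelow
  have hle : ∀ π' : Fin n → ℝ, lagDual n g π' ≤ g xhat - ∑ j, π' j * binVec xhat j :=
    fun π' => ciInf_le (hbdd π') xhat
  have hkey : ∀ r, g xhat - ∑ j, π j * binVec xhat j ≤ g r - ∑ j, π j * binVec r j := by
    intro r
    by_cases hr : r = xhat
    · subst hr; exact le_refl _
    · have hdiff : ∑ j, (π j * binVec xhat j - π j * binVec r j)
        = (g xhat - L) * ∑ j, (if xhat j = r j then (0:ℝ) else 1) := by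
        subst hπ
        rw [Finset.mul_sum]
        apply Finset.sum_congr rfl
        intro j _
        rcases Bool.eq_false_or_eq_true (xhat j) with h1 | h1 <;>
          rcases Bool.eq_false_or_eq_true (r j) with h2 | h2 <;>
          simp [binVec, h1, h2] <;> ring
      obtain ⟨j0, hj0⟩ : ∃ j, xhat j ≠ r j := by
        by_contra h
        push_neg at h
        exact hr (funext fun j => (h j).symm)
      have hsum1 : (1:ℝ) ≤ ∑ j, (if xhat j = r j then (0:ℝ) else 1) := by
        have h1 := Finset.single_le_sum
          (f := fun j => (if xhat j = r j then (0:ℝ) else 1))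
          (fun j _ => by by_cases h : xhat j = r j <;> simp [h]) (Finset.mem_univ j0)
        simpa [hj0] using h1
      have h2 : g xhat - L ≤ (g xhat - L) * ∑ j, (if xhat j = r j then (0:ℝ) else 1) :=
        le_mul_of_one_le_right hc hsum1
      have h3 : ∑ j, (π j * binVec xhat j - π j * binVec r j)
          = (∑ j, π j * binVec xhat j) - ∑ j, π j * binVec r j :=
        Finset.sum_sub_distrib _ _
      have h4 := hL r
      linarith [hdiff, h2, h3]
  have hlag : lagDual n g π = g xhat - ∑ j, π j * binVec xhat j :=
    le_antisymm (hle π) (le_ciInf hkey)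
  exact ⟨by linarith [hlag], fun π' => by linarith [hle π', hlag], hlag⟩
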